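/- Let f : ℝⁿ → ℝ be convex and differentiable, T > 0, r < 0, and let X : [0,T) → ℝⁿ solve 0 = Ẍ + (r/(t−T))Ẋ + 2∇f(X) with X(0) = X₀, Ẋ(0) = 0 and sup_{t∈[0,T)}‖Ẋ(t)‖ < ∞. Then X is Lipschitz on [0,T), extends continuously to [0,T], and lim_{t→T⁻} Ẋ(t) = 0. -/

import Mathlib

open Filter MeasureTheory
open scoped RealInnerProductSpace Topology

theorem ogmg_ode_extension
    {E : Type*} [NormedAddCommGroup E] [InnerProductSpace ℝ E] [CompleteSpace E]
    (f : E → ℝ) (g : E → E)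
    (hgrad : ∀ x, HasGradientAt f (g x) x)
    (hconv : ∀ x y, 0 ≤ f x - f y - ⟪g y, x - y⟫)
    (T : ℝ) (hT : 0 < T) (r : ℝ) (hr : r < 0)
    (X X' X'' : ℝ → E)
    (hX' : ∀ t ∈ Set.Ico (0:ℝ) T, HasDerivAt X (X' t) t)
    (hX'' : ∀ t ∈ Set.Ico (0:ℝ) T, HasDerivAt X' (X'' t) t)
    (hODE : ∀ t ∈ Set.Ico (0:ℝ) T,
      X'' t + (r / (t - T)) • X' t + (2:ℝ) • g (X t) = 0)
    (X₀ : E) (hX0 : X 0 = X₀) (hXd0 : X' 0 = 0)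
    (M : ℝ) (hM : ∀ t ∈ Set.Ico (0:ℝ) T, ‖X' t‖ ≤ M) :
    (∃ C ≥ (0:ℝ), ∀ s ∈ Set.Ico (0:ℝ) T, ∀ t ∈ Set.Ico (0:ℝ) T,
        ‖X s - X t‖ ≤ C * |s - t|)
      ∧ (∃ XT : E, Tendsto X (𝓝[<] T) (𝓝 XT))
      ∧ Tendsto X' (𝓝[<] T) (𝓝 0) := by
  have hM0 : 0 ≤ M := le_trans (norm_nonneg _) (hM 0 ⟨le_refl 0, hT⟩)
  have hIco : Convex ℝ (Set.Ico (0:ℝ) T) := convex_Ico 0 T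
  -- Part 1 : Lipschitz
  have hlip : ∀ s ∈ Set.Ico (0:ℝ) T, ∀ t ∈ Set.Ico (0:ℝ) T, ‖X s - X t‖ ≤ M * |s - t| := by
    intro s hs t ht
    have := Convex.norm_image_sub_le_of_norm_hasDerivWithin_le
      (f := X) (f' := X') (s := Set.Ico (0:ℝ) T)
      (fun x hx => (hX' x hx).hasDerivWithinAt) hM hIco ht hs
    simpa [Real.norm_eq_abs] using this
  -- Part 2 : continuous extension
  have hcauchy : Cauchy (Filter.map X (𝓝[<] T)) := by
    rw [Metric.cauchy_iff]
    refine ⟨Filter.map_neBot, ?_⟩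
    intro ε hε
    set δ : ℝ := min (ε / (2 * (M + 1))) (T / 2) with hδdef
    have hδpos : 0 < δ := lt_min (by positivity) (by linarith)
    have hδT : δ ≤ T / 2 := min_le_right _ _
    have hsub : Set.Ioo (T - δ) T ⊆ Set.Ico (0:ℝ) T := by
      intro x hx
      exact ⟨by linarith [hx.1], hx.2⟩
    refine ⟨X '' Set.Ioo (T - δ) T, ?_, ?_⟩
    · exact Filter.image_mem_map (Ioo_mem_nhdsLT_of_mem ⟨by linarith, le_refl T⟩)
    · rintro _ ⟨s, hs, rfl⟩ _ ⟨t, ht, rfl⟩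
      have h1 : ‖X s - X t‖ ≤ M * |s - t| := hlip s (hsub hs) t (hsub ht)
      have h2 : |s - t| ≤ δ := by
        rw [abs_sub_le_iff]
        constructor <;> [linarith [hs.2, ht.1]; linarith [ht.2, hs.1]]
      have h3 : M * |s - t| ≤ (M + 1) * δ := by
        have : M * |s - t| ≤ M * δ := mul_le_mul_of_nonneg_left h2 hM0
        nlinarith
      have h4 : (M + 1) * δ < ε := by
        have hδε : δ ≤ ε / (2 * (M + 1)) := min_le_left _ _
        have : (M + 1) * δ ≤ (M + 1) * (ε / (2 * (M + 1))) :=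
          mul_le_mul_of_nonneg_left hδε (by linarith)
        have heq : (M + 1) * (ε / (2 * (M + 1))) = ε / 2 := by
          field_simp
        rw [heq] at this
        linarith
      calc dist (X s) (X t) = ‖X s - X t‖ := dist_eq_norm _ _
        _ ≤ M * |s - t| := h1
        _ ≤ (M + 1) * δ := h3
        _ < ε := h4
  obtain ⟨XT, hXT⟩ := CompleteSpace.complete hcauchy
  have hXTlim : Tendsto X (𝓝[<] T) (𝓝 XT) := hXT
  refine ⟨⟨M, hM0, hlip⟩, ⟨XT, hXTlim⟩, ?_⟩
  -- Part 3 : the velocity tends to zero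
  set φ : ℝ → ℝ := fun t => ⟪X' t, X' t⟫ + 4 * f (X t) with hφdef
  have hφ' : ∀ t ∈ Set.Ico (0:ℝ) T,
      HasDerivAt φ (2 * r / (T - t) * ⟪X' t, X' t⟫) t := by
    intro t ht
    have hTt : 0 < T - t := by linarith [ht.2]
    have h1 : HasDerivAt (fun s => ⟪X' s, X' s⟫) (⟪X' t, X'' t⟫ + ⟪X'' t, X' t⟫) t :=
      HasDerivAt.inner ℝ (hX'' t ht) (hX'' t ht)
    have h2 : HasDerivAt (fun s => f (X s)) (⟪g (X t), X' t⟫) t := by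
      have := (hgrad (X t)).hasFDerivAt.comp_hasDerivAt t (hX' t ht)
      simpa [InnerProductSpace.toDual_apply_apply, Function.comp_def] using this
    have h3 : HasDerivAt φ (⟪X' t, X'' t⟫ + ⟪X'' t, X' t⟫ + 4 * ⟪g (X t), X' t⟫) t :=
      h1.add (h2.const_mul 4)
    have hXdd : X'' t = (r / (T - t)) • X' t - (2:ℝ) • g (X t) := by
      have h := hODE t ht
      have h' : X'' t + ((r / (t - T)) • X' t + (2:ℝ) • g (X t)) = 0 := by
        rw [← add_assoc]; exact h
      have h'' := eq_neg_of_add_eq_zero_left h'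
      rw [h'']
      have hrt : r / (t - T) = -(r / (T - t)) := by
        rw [show t - T = -(T - t) by ring, div_neg]
      rw [hrt]
      rw [neg_add, neg_smul, neg_neg]
      abel
    have hval : ⟪X' t, X'' t⟫ + ⟪X'' t, X' t⟫ + 4 * ⟪g (X t), X' t⟫
        = 2 * r / (T - t) * ⟪X' t, X' t⟫ := by
      rw [hXdd]
      rw [inner_sub_left, inner_sub_right, real_inner_smul_left, real_inner_smul_right,
        real_inner_smul_left, real_inner_smul_right,
        real_inner_comm (X' t) (g (X t))]
      ring
    rw [← hval]
    exact h3
  have hφcont : ContinuousOn φ (Set.Ico 0 T) :=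
    fun t ht => ((hφ' t ht).continuousAt).continuousWithinAt
  have hIooIco : Set.Ioo (0:ℝ) T ⊆ Set.Ico 0 T := Set.Ioo_subset_Ico_self
  have hφanti : AntitoneOn φ (Set.Ico 0 T) := by
    refine antitoneOn_of_deriv_nonpos hIco hφcont ?_ ?_
    · intro t ht
      rw [interior_Ico] at ht
      exact ((hφ' t (hIooIco ht)).differentiableAt).differentiableWithinAt
    · intro t ht
      rw [interior_Ico] at ht
      rw [(hφ' t (hIooIco ht)).deriv]
      have hTt : 0 < T - t := by linarith [ht.2]
      have h1 : 2 * r / (T - t) ≤ 0 := div_nonpos_iff.mpr (Or.inr ⟨by linarith, le_of_lt hTt⟩)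
      exact mul_nonpos_of_nonpos_of_nonneg h1 real_inner_self_nonneg
  -- lower bound for φ
  set B : ℝ := 4 * f X₀ - 4 * (‖g X₀‖ * (M * T)) with hBdef
  have hφlb : ∀ t ∈ Set.Ico (0:ℝ) T, B ≤ φ t := by
    intro t ht
    have h0 : (0:ℝ) ∈ Set.Ico (0:ℝ) T := ⟨le_refl 0, hT⟩
    have hdist : ‖X t - X₀‖ ≤ M * T := by
      have := hlip t ht 0 h0
      rw [hX0] at this
      have habs : |t - 0| ≤ T := by
        rw [sub_zero, abs_of_nonneg ht.1]; exact le_of_lt ht.2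
      calc ‖X t - X₀‖ ≤ M * |t - 0| := this
        _ ≤ M * T := mul_le_mul_of_nonneg_left habs hM0
    have hinner : -(‖g X₀‖ * (M * T)) ≤ ⟪g X₀, X t - X₀⟫ := by
      have h1 : |⟪g X₀, X t - X₀⟫| ≤ ‖g X₀‖ * ‖X t - X₀‖ := abs_real_inner_le_norm _ _
      have h2 : ‖g X₀‖ * ‖X t - X₀‖ ≤ ‖g X₀‖ * (M * T) :=
        mul_le_mul_of_nonneg_left hdist (norm_nonneg _)
      have h3 := (abs_le.mp h1).1
      linarith
    have hcv := hconv (X t) X₀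
    have hsq : (0:ℝ) ≤ ⟪X' t, X' t⟫ := real_inner_self_nonneg
    simp only [hφdef, hBdef]
    linarith
  -- limit of φ
  have hne : (Set.Ioo (0:ℝ) T).Nonempty := ⟨T / 2, by constructor <;> linarith⟩
  have hbdd : BddBelow (φ '' Set.Ioo 0 T) := by
    refine ⟨B, ?_⟩
    rintro _ ⟨t, ht, rfl⟩
    exact hφlb t (hIooIco ht)
  set L : ℝ := sInf (φ '' Set.Ioo 0 T) with hLdef
  have hφtend : Tendsto φ (𝓝[<] T) (𝓝 L) :=
    AntitoneOn.tendsto_nhdsWithin_Ioo_left hne (hφanti.mono hIooIco) hbdd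
  have hfXtend : Tendsto (fun t => f (X t)) (𝓝[<] T) (𝓝 (f XT)) :=
    ((hgrad XT).hasFDerivAt.continuousAt.tendsto).comp hXTlim
  set c : ℝ := L - 4 * f XT with hcdef
  have hQtend : Tendsto (fun t => ⟪X' t, X' t⟫) (𝓝[<] T) (𝓝 c) := by
    have heq : (fun t => ⟪X' t, X' t⟫) = fun t => φ t - 4 * f (X t) := by
      funext t; simp only [hφdef]; ring
    rw [heq]
    exact hφtend.sub (hfXtend.const_mul 4)
  have hc0 : 0 ≤ c := by
    refine ge_of_tendsto hQtend ?_
    exact Filter.Eventually.of_forall (fun t => real_inner_self_nonneg)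
  -- c = 0 by contradiction
  have hceq : c = 0 := by
    by_contra hcne
    have hcpos : 0 < c := lt_of_le_of_ne hc0 (Ne.symm hcne)
    have hev : ∀ᶠ t in 𝓝[<] T, c / 2 < ⟪X' t, X' t⟫ :=
      hQtend.eventually (eventually_gt_nhds (by linarith))
    obtain ⟨S, hS, hSsub⟩ := Filter.eventually_iff_exists_mem.mp hev
    obtain ⟨l, hlT, hIoosub⟩ :=
      (mem_nhdsLT_iff_exists_Ioo_subset' (show T - 1 < T by linarith)).mp hS
    set t₁ : ℝ := max l 0 with ht₁def
    have ht₁T : t₁ < T := max_lt hlT hT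
    have ht₁0 : 0 ≤ t₁ := le_max_right _ _
    have hQlb : ∀ t ∈ Set.Ioo t₁ T, c / 2 ≤ ⟪X' t, X' t⟫ := by
      intro t ht
      have : t ∈ Set.Ioo l T := ⟨lt_of_le_of_lt (le_max_left l 0) ht.1, ht.2⟩
      exact le_of_lt (hSsub t (hIoosub this))
    have hIcosub : Set.Ico t₁ T ⊆ Set.Ico 0 T := fun x hx => ⟨le_trans ht₁0 hx.1, hx.2⟩
    -- ψ := φ + (r*c) * log (T - ·) is antitone on [t₁, T)
    set ψ : ℝ → ℝ := fun t => φ t + r * c * Real.log (T - t) with hψdef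
    have hψ' : ∀ t ∈ Set.Ico t₁ T,
        HasDerivAt ψ (2 * r / (T - t) * ⟪X' t, X' t⟫ + r * c * (-1 / (T - t))) t := by
      intro t ht
      have hTt : 0 < T - t := by linarith [ht.2]
      have hlog : HasDerivAt (fun s => Real.log (T - s)) (-1 / (T - t)) t := by
        have h1 : HasDerivAt (fun s : ℝ => T - s) (-1) t := (hasDerivAt_id t).const_sub T
        have := h1.log (ne_of_gt hTt)
        simpa using this
      exact (hφ' t (hIcosub ht)).add (hlog.const_mul (r * c))
    have hψanti : AntitoneOn ψ (Set.Ico t₁ T) := by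
      refine antitoneOn_of_deriv_nonpos (convex_Ico t₁ T)
        (fun t ht => ((hψ' t ht).continuousAt).continuousWithinAt) ?_ ?_
      · intro t ht
        rw [interior_Ico] at ht
        exact ((hψ' t (Set.Ioo_subset_Ico_self ht)).differentiableAt).differentiableWithinAt
      · intro t ht
        rw [interior_Ico] at ht
        rw [(hψ' t (Set.Ioo_subset_Ico_self ht)).deriv]
        have hTt : 0 < T - t := by linarith [ht.2]
        have hQ := hQlb t ht
        have heq : 2 * r / (T - t) * ⟪X' t, X' t⟫ + r * c * (-1 / (T - t))
            = r * (2 * ⟪X' t, X' t⟫ - c) * (T - t)⁻¹ := by ring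
        rw [heq]
        have h1 : r * (2 * ⟪X' t, X' t⟫ - c) ≤ 0 :=
          mul_nonpos_of_nonpos_of_nonneg (le_of_lt hr) (by linarith)
        exact mul_nonpos_of_nonpos_of_nonneg h1 (inv_nonneg.mpr (le_of_lt hTt))
    -- pick t₂ close to T to derive a contradiction
    have hrc : r * c < 0 := mul_neg_of_neg_of_pos hr hcpos
    set K : ℝ := (ψ t₁ - B) / (r * c) with hKdef
    set δ : ℝ := min (Real.exp K / 2) ((T - t₁) / 2) with hδdef
    have hδpos : 0 < δ := lt_min (by positivity) (by linarith)
    set t₂ : ℝ := T - δ with ht₂def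
    have ht₂mem : t₂ ∈ Set.Ico t₁ T := by
      constructor
      · have : δ ≤ (T - t₁) / 2 := min_le_right _ _
        simp only [ht₂def]; linarith
      · simp only [ht₂def]; linarith
    have hlogδ : Real.log δ < K := by
      rw [Real.log_lt_iff_lt_exp hδpos]
      have h1 : δ ≤ Real.exp K / 2 := min_le_left _ _
      have := Real.exp_pos K
      linarith
    have hmul : ψ t₁ - B < r * c * Real.log δ := by
      have h1 : r * c * K < r * c * Real.log δ := by
        exact (mul_lt_mul_left_of_neg hrc).mpr hlogδ
      have h2 : r * c * K = ψ t₁ - B := by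
        simp only [hKdef]
        rw [mul_div_assoc']
        exact mul_div_cancel_left₀ _ (ne_of_lt hrc)
      linarith
    have hψle : ψ t₂ ≤ ψ t₁ :=
      hψanti (Set.left_mem_Ico.mpr ht₁T) ht₂mem ht₂mem.1
    have hφB : B ≤ φ t₂ := hφlb t₂ (hIcosub ht₂mem)
    have hTt₂ : T - t₂ = δ := by simp [ht₂def]
    have : ψ t₂ = φ t₂ + r * c * Real.log δ := by
      simp only [hψdef, hTt₂]
    linarith [hψle, hφB, hmul, this.ge, this.le]
  -- conclude
  rw [hceq] at hQtend
  rw [tendsto_zero_iff_norm_tendsto_zero]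
  have hsqrt : Tendsto (fun t => Real.sqrt ⟪X' t, X' t⟫) (𝓝[<] T) (𝓝 0) := by
    have := (Real.continuous_sqrt.tendsto 0).comp hQtend
    simpa [Function.comp_def, Real.sqrt_sq_eq_abs] using this
  refine hsqrt.congr (fun t => ?_)
  rw [real_inner_self_eq_norm_mul_norm, Real.sqrt_mul_self (norm_nonneg _)]
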